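/- Let (Ω,Σ,μ) be a probability space and let a_n : L^∞(Ω,μ;ℂ) → L⁰(Ω,μ;ℂ) be a sequence of linear maps such that for every x ∈ L^∞, sup_n |a_n(x)(ω)| < ∞ for μ-almost every ω, and such that for all ε > 0 and δ > 0 there exists γ > 0 with: every x ∈ L^∞ with ‖x‖_∞ ≤ 1 and μ{ ω : |x(ω)| > γ } ≤ γ satisfies μ{ ω : sup_n |a_n(x)(ω)| > δ } ≤ ε. Then the set { x : ‖x‖_∞ ≤ 1 and (a_n(x))_n converges μ-almost everywhere } is sequentially closed in the unit ball of L^∞ with respect to convergence in measure: if x_k are in this set, ‖x‖_∞ ≤ 1, and x_k → x in measure, then (a_n(x))_n converges μ-almost everywhere. -/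

import Mathlib

set_option maxHeartbeats 1000000


open MeasureTheory Filter Topology
open scoped ENNReal

/-- Auxiliary: the "Cauchy defect" of a sequence controlled by a convergent sequence plus a
remainder with maximal function `R` is at most `2 * R`. -/
lemma stmt_10_aux_defect {g h : ℕ → ℂ} {l : ℂ} (R : ℝ≥0∞)
    (hconv : Tendsto h atTop (𝓝 l))
    (hR : ∀ n, (‖g n - h n‖₊ : ℝ≥0∞) ≤ R) :
    (⨅ N : ℕ, ⨆ m, ⨆ n, edist (g (N + m)) (g (N + n))) ≤ 2 * R := by
  refine ENNReal.le_of_forall_pos_le_add fun ε hε _ => ?_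
  have hε' : (0 : ℝ≥0∞) < (ε : ℝ≥0∞) / 2 := by
    simp [ENNReal.div_pos_iff, hε.ne']
  obtain ⟨N, hN⟩ := (EMetric.tendsto_atTop.1 hconv) ((ε : ℝ≥0∞) / 2) hε'
  refine le_trans (iInf_le _ N) ?_
  refine iSup_le fun m => iSup_le fun n => ?_
  have key : ∀ p, edist (g (N + p)) l ≤ R + (ε : ℝ≥0∞) / 2 := by
    intro p
    calc edist (g (N + p)) l ≤ edist (g (N + p)) (h (N + p)) + edist (h (N + p)) l :=
          edist_triangle _ _ _
      _ ≤ R + (ε : ℝ≥0∞) / 2 := by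
          refine add_le_add ?_ (le_of_lt (hN _ (Nat.le_add_right _ _)))
          rw [edist_eq_enorm_sub]
          exact hR _
  calc edist (g (N + m)) (g (N + n)) ≤ edist (g (N + m)) l + edist l (g (N + n)) :=
        edist_triangle _ _ _
    _ ≤ (R + (ε : ℝ≥0∞) / 2) + (R + (ε : ℝ≥0∞) / 2) := by
        refine add_le_add (key m) ?_
        rw [edist_comm]; exact key n
    _ = 2 * R + (ε : ℝ≥0∞) := by
        rw [two_mul]; ring_nf
        rw [ENNReal.div_mul_cancel (by norm_num) (by norm_num)]

/-- Theorem 0.3 (commutative): if `a_n : L^∞ → L⁰` are linear maps whose maximal function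
is finite a.e. for every `x ∈ L^∞` and whose maximal operator is continuous at `0` on the
unit ball of `L^∞` in measure, then the set of `x` in the unit ball for which `(a_n(x))`
converges a.e. is sequentially closed in the unit ball with respect to convergence in
measure. -/
theorem stmt_10 {Ω : Type*} [MeasurableSpace Ω] (μ : Measure Ω) [IsProbabilityMeasure μ]
    (a : ℕ → (Lp ℂ ⊤ μ) →ₗ[ℂ] (Ω →ₘ[μ] ℂ))
    (ha_bdd : ∀ x : Lp ℂ ⊤ μ, ∀ᵐ ω ∂μ, (⨆ n, (‖(a n x : Ω → ℂ) ω‖₊ : ℝ≥0∞)) < ⊤)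
    (ha_max : ∀ ε δ : ℝ, 0 < ε → 0 < δ → ∃ γ : ℝ, 0 < γ ∧ ∀ x : Lp ℂ ⊤ μ, ‖x‖ ≤ 1 →
      μ {ω | γ < ‖(x : Ω → ℂ) ω‖} ≤ ENNReal.ofReal γ →
      μ {ω | ENNReal.ofReal δ < ⨆ n, (‖(a n x : Ω → ℂ) ω‖₊ : ℝ≥0∞)} ≤ ENNReal.ofReal ε)
    (xs : ℕ → Lp ℂ ⊤ μ) (x : Lp ℂ ⊤ μ)
    (hxs_ball : ∀ k, ‖xs k‖ ≤ 1)
    (hxs_conv : ∀ k, ∃ f : Ω → ℂ, Measurable f ∧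
      ∀ᵐ ω ∂μ, Tendsto (fun n => (a n (xs k) : Ω → ℂ) ω) atTop (𝓝 (f ω)))
    (hx_ball : ‖x‖ ≤ 1)
    (hxs_x : TendstoInMeasure μ (fun k ω => (xs k : Ω → ℂ) ω) atTop (fun ω => (x : Ω → ℂ) ω)) :
    ∃ f : Ω → ℂ, Measurable f ∧
      ∀ᵐ ω ∂μ, Tendsto (fun n => (a n x : Ω → ℂ) ω) atTop (𝓝 (f ω)) := by
  classical
  set T : Ω → ℝ≥0∞ := fun ω =>
    ⨅ N : ℕ, ⨆ m, ⨆ n, edist ((a (N + m) x : Ω → ℂ) ω) ((a (N + n) x : Ω → ℂ) ω) with hT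
  set y : ℕ → Lp ℂ ⊤ μ := fun k => (2⁻¹ : ℂ) • (x - xs k) with hy
  -- Step 1 : a.e. bound of the Cauchy defect by the maximal function of `y k`
  have step1 : ∀ k : ℕ, ∀ᵐ ω ∂μ,
      T ω ≤ 2 * (2 * ⨆ n, (‖(a n (y k) : Ω → ℂ) ω‖₊ : ℝ≥0∞)) := by
    intro k
    obtain ⟨f, -, hf⟩ := hxs_conv k
    have hsub : ∀ n : ℕ, ∀ᵐ ω ∂μ,
        (a n x : Ω → ℂ) ω - (a n (xs k) : Ω → ℂ) ω = (2 : ℂ) • (a n (y k) : Ω → ℂ) ω := by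
      intro n
      have h2y : (2 : ℂ) • y k = x - xs k := by
        simp only [hy, smul_smul]; norm_num
      have heq : a n x - a n (xs k) = (2 : ℂ) • a n (y k) := by
        rw [← _root_.map_smul, h2y, map_sub]
      filter_upwards [AEEqFun.coeFn_sub (a n x) (a n (xs k)),
        AEEqFun.coeFn_smul (2 : ℂ) (a n (y k))] with ω h1 h2
      calc (a n x : Ω → ℂ) ω - (a n (xs k) : Ω → ℂ) ω
          = ((a n x - a n (xs k) : Ω →ₘ[μ] ℂ) : Ω → ℂ) ω := by
            rw [h1]; rfl
        _ = (((2:ℂ) • a n (y k) : Ω →ₘ[μ] ℂ) : Ω → ℂ) ω := by rw [heq]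
        _ = (2 : ℂ) • (a n (y k) : Ω → ℂ) ω := by rw [h2]; rfl
    filter_upwards [hf, ae_all_iff.2 hsub] with ω hω hωs
    simp only [hT]
    refine stmt_10_aux_defect (g := fun j => (a j x : Ω → ℂ) ω)
      (h := fun j => (a j (xs k) : Ω → ℂ) ω) (l := f ω) _ hω fun n => ?_
    rw [hωs n, nnnorm_smul]
    push_cast
    rw [RCLike.nnnorm_two]
    push_cast
    gcongr
    exact le_iSup (fun n => (‖(a n (y k) : Ω → ℂ) ω‖₊ : ℝ≥0∞)) n
  -- Step 2 : the Cauchy defect is a.e. small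
  have step2 : ∀ δ : ℝ, 0 < δ → μ {ω | ENNReal.ofReal δ < T ω} = 0 := by
    intro δ hδ
    refine le_antisymm ?_ zero_le
    refine ENNReal.le_of_forall_pos_le_add fun ε hε _ => ?_
    rw [zero_add, ← ENNReal.ofReal_coe_nnreal]
    have hε' : (0 : ℝ) < ε := hε
    obtain ⟨γ, hγ, hγ'⟩ := ha_max ε (δ / 4) hε' (by linarith)
    have hγpos : (0 : ℝ≥0∞) < ENNReal.ofReal γ := ENNReal.ofReal_pos.2 hγ
    obtain ⟨k, hk⟩ := ((tendstoInMeasure_iff_dist.1 hxs_x γ hγ).eventually_lt_const hγpos).exists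
    -- the chosen `y k` lies in the unit ball
    have hy_ball : ‖y k‖ ≤ 1 := by
      simp only [hy]
      have hxx : ‖x - xs k‖ ≤ 2 := le_trans (norm_sub_le _ _) (by linarith [hxs_ball k])
      have h2 : ‖(2⁻¹ : ℂ)‖ = 2⁻¹ := by
        rw [norm_inv, RCLike.norm_two]
      calc ‖(2⁻¹ : ℂ) • (x - xs k)‖ = ‖(2⁻¹ : ℂ)‖ * ‖x - xs k‖ := norm_smul _ _
        _ ≤ 2⁻¹ * 2 := by rw [h2]; gcongr
        _ = 1 := by norm_num
    -- `y k` is small in measure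
    have hy_small : μ {ω | γ < ‖(y k : Ω → ℂ) ω‖} ≤ ENNReal.ofReal γ := by
      refine le_trans (measure_mono_ae ?_) hk.le
      filter_upwards [Lp.coeFn_smul (2⁻¹ : ℂ) (x - xs k), Lp.coeFn_sub x (xs k)]
        with ω h1 h2 hmem
      have hnorm : ‖(y k : Ω → ℂ) ω‖ = 2⁻¹ * ‖(x : Ω → ℂ) ω - (xs k : Ω → ℂ) ω‖ := by
        simp only [hy]
        rw [h1]
        simp only [Pi.smul_apply, h2, Pi.sub_apply, norm_smul, norm_inv, RCLike.norm_two]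
      have hmem' : γ < 2⁻¹ * ‖(x : Ω → ℂ) ω - (xs k : Ω → ℂ) ω‖ := by
        rw [← hnorm]; exact hmem
      show γ ≤ dist ((xs k : Ω → ℂ) ω) ((x : Ω → ℂ) ω)
      rw [dist_eq_norm, norm_sub_rev]
      have h0 : (0 : ℝ) ≤ ‖(x : Ω → ℂ) ω - (xs k : Ω → ℂ) ω‖ := norm_nonneg _
      linarith
    have hmax := hγ' (y k) hy_ball hy_small
    refine le_trans (measure_mono_ae ?_) hmax
    filter_upwards [step1 k] with ω h1 hmem
    have hmem' : ENNReal.ofReal δ < T ω := hmem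
    by_contra hcon
    have hcon' : (⨆ n, (‖(a n (y k) : Ω → ℂ) ω‖₊ : ℝ≥0∞)) ≤ ENNReal.ofReal (δ / 4) :=
      not_lt.1 hcon
    have h4 : T ω ≤ 4 * ⨆ n, (‖(a n (y k) : Ω → ℂ) ω‖₊ : ℝ≥0∞) := by
      refine le_trans h1 (le_of_eq ?_)
      rw [← mul_assoc]; norm_num
    have : T ω ≤ ENNReal.ofReal δ := by
      refine le_trans h4 ?_
      calc (4 : ℝ≥0∞) * ⨆ n, (‖(a n (y k) : Ω → ℂ) ω‖₊ : ℝ≥0∞)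
          ≤ 4 * ENNReal.ofReal (δ / 4) := mul_le_mul_right hcon' 4
        _ = ENNReal.ofReal 4 * ENNReal.ofReal (δ / 4) := by
            rw [ENNReal.ofReal_ofNat]
        _ = ENNReal.ofReal (4 * (δ / 4)) := by rw [ENNReal.ofReal_mul]; norm_num
        _ = ENNReal.ofReal δ := by congr 1; ring
    exact absurd hmem' (not_lt.2 this)
  -- Step 3 : the Cauchy defect vanishes a.e.
  have step3 : ∀ᵐ ω ∂μ, T ω = 0 := by
    have hj : ∀ j : ℕ, ∀ᵐ ω ∂μ, T ω ≤ ENNReal.ofReal (1 / (j + 1)) := by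
      intro j
      have h0 := step2 (1 / (j + 1)) (by positivity)
      rw [ae_iff]
      simpa [not_le] using h0
    filter_upwards [ae_all_iff.2 hj] with ω hω
    refine le_antisymm ?_ zero_le
    refine ENNReal.le_of_forall_pos_le_add fun ε hε _ => ?_
    rw [zero_add]
    obtain ⟨j, hjε⟩ := exists_nat_one_div_lt (show (0 : ℝ) < ε from hε)
    refine le_trans (hω j) (le_trans (ENNReal.ofReal_le_ofReal hjε.le) ?_)
    rw [ENNReal.ofReal_coe_nnreal]
  -- Step 4 : a.e. convergence
  have hae : ∀ᵐ ω ∂μ, ∃ l : ℂ, Tendsto (fun n => (a n x : Ω → ℂ) ω) atTop (𝓝 l) := by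
    filter_upwards [step3] with ω hω
    refine cauchySeq_tendsto_of_complete ?_
    rw [EMetric.cauchySeq_iff]
    intro ε hε
    have hlt : T ω < ε := by rw [hω]; exact hε
    rw [hT] at hlt
    simp only [iInf_lt_iff] at hlt
    obtain ⟨N, hN⟩ := hlt
    refine ⟨N, fun m hm n hn => ?_⟩
    have hm' : N + (m - N) = m := Nat.add_sub_cancel' hm
    have hn' : N + (n - N) = n := Nat.add_sub_cancel' hn
    calc edist ((a m x : Ω → ℂ) ω) ((a n x : Ω → ℂ) ω)
        = edist ((a (N + (m - N)) x : Ω → ℂ) ω) ((a (N + (n - N)) x : Ω → ℂ) ω) := by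
          rw [hm', hn']
      _ ≤ ⨆ p, ⨆ q, edist ((a (N + p) x : Ω → ℂ) ω) ((a (N + q) x : Ω → ℂ) ω) :=
          le_iSup₂ (f := fun p q => edist ((a (N + p) x : Ω → ℂ) ω) ((a (N + q) x : Ω → ℂ) ω))
            (m - N) (n - N)
      _ < ε := hN
  exact measurable_limit_of_tendsto_metrizable_ae (fun n => (a n x).aemeasurable) hae
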